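/- Let Ω ⊆ ℝ^D be compact with Lebesgue measure 1 and let g : ℝ^D → ℝ be nonnegative and integrable on Ω. If p : ℝ^D → ℝ is 1-Lipschitz on Ω, nonnegative on Ω, and satisfies ∫_Ω p dx = 1 (i.e., p ∈ V̂), then ∫_Ω g(x) p(x) dx ≤ (diam(Ω) + 1) · ∫_Ω g(x) dx. In particular, the supremum over p ∈ V̂ of ∫_Ω r²(x;θ) p(x) dx is bounded by M · ∫_Ω r²(x;θ) dx with the explicit constant M = diam(Ω) + 1. -/

import Mathlib

open MeasureTheory

/-- For a nonnegative integrable `g` on a compact `Ω` of measure one, the integral of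
`g` weighted by any `1`-Lipschitz probability density `p` on `Ω` is bounded by
`(diam Ω + 1) ∫_Ω g`. -/
theorem weighted_integral_bound
    (D : ℕ) (hD : 0 < D)
    (Ω : Set (EuclideanSpace ℝ (Fin D)))
    (hΩc : IsCompact Ω) (hΩvol : volume Ω = 1)
    (g p : EuclideanSpace ℝ (Fin D) → ℝ)
    (hg_nonneg : ∀ x ∈ Ω, 0 ≤ g x)
    (hg_int : IntegrableOn g Ω volume)
    (hp_lip : ∀ x ∈ Ω, ∀ y ∈ Ω, |p x - p y| ≤ ‖x - y‖)
    (hp_nonneg : ∀ x ∈ Ω, 0 ≤ p x)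
    (hp_int : ∫ x in Ω, p x = 1) :
    ∫ x in Ω, g x * p x ≤ (Metric.diam Ω + 1) * ∫ x in Ω, g x := by
  have hΩm : MeasurableSet Ω := hΩc.isClosed.measurableSet
  -- p is continuous on Ω
  have hp_cont : ContinuousOn p Ω := by
    intro x hx
    refine Metric.continuousWithinAt_iff.2 fun ε hε => ⟨ε, hε, fun y hy hd => ?_⟩
    calc dist (p y) (p x) = |p y - p x| := rfl
      _ ≤ ‖y - x‖ := hp_lip y hy x hx
      _ < ε := by rwa [← dist_eq_norm]
  have hp_integrable : IntegrableOn p Ω volume := by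
    exact hp_cont.integrableOn_compact hΩc
  -- pointwise bound: p x ≤ diam Ω + 1 on Ω
  have hbound : ∀ x ∈ Ω, p x ≤ Metric.diam Ω + 1 := by
    intro x hx
    have h1 : p x = ∫ _y in Ω, p x := by
      rw [setIntegral_const, Measure.real, hΩvol]
      simp
    have h2 : (∫ _y in Ω, p x) ≤ ∫ y in Ω, (p y + Metric.diam Ω) := by
      apply setIntegral_mono_on (integrableOn_const (by simp [hΩvol]))
        (hp_integrable.add (integrableOn_const (by simp [hΩvol]))) hΩm
      intro y hy
      show p x ≤ p y + Metric.diam Ω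
      have := hp_lip x hx y hy
      have hdist : ‖x - y‖ ≤ Metric.diam Ω := by
        rw [← dist_eq_norm]
        exact Metric.dist_le_diam_of_mem hΩc.isBounded hx hy
      have := abs_le.1 this
      linarith [this.2]
    have h3 : (∫ y in Ω, (p y + Metric.diam Ω)) = 1 + Metric.diam Ω := by
      rw [integral_add hp_integrable (integrableOn_const (by simp [hΩvol])),
        hp_int, setIntegral_const, Measure.real, hΩvol]
      simp
    linarith [h1 ▸ (h3 ▸ h2)]
  -- integrability of g * p
  have hgp_int : IntegrableOn (fun x => g x * p x) Ω volume := by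
    refine Integrable.mono (hg_int.const_mul (Metric.diam Ω + 1))
      (hg_int.1.mul (hp_cont.aestronglyMeasurable hΩm)) ?_
    filter_upwards [ae_restrict_mem hΩm] with x hx
    rw [Real.norm_eq_abs, Real.norm_eq_abs, abs_mul, abs_mul]
    have h1 : |p x| ≤ Metric.diam Ω + 1 := by
      rw [abs_of_nonneg (hp_nonneg x hx)]; exact hbound x hx
    have h2 : |(Metric.diam Ω + 1)| = Metric.diam Ω + 1 := by
      rw [abs_of_nonneg]; positivity
    rw [h2, mul_comm (Metric.diam Ω + 1)]
    exact mul_le_mul_of_nonneg_left h1 (abs_nonneg _)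
  calc ∫ x in Ω, g x * p x ≤ ∫ x in Ω, (Metric.diam Ω + 1) * g x := by
        apply setIntegral_mono_on hgp_int (hg_int.const_mul _) hΩm
        intro x hx
        rw [mul_comm]
        exact mul_le_mul_of_nonneg_right (hbound x hx) (hg_nonneg x hx)
    _ = (Metric.diam Ω + 1) * ∫ x in Ω, g x := by rw [integral_const_mul]
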